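/- An odd positive integer n ≥ 3 is prime if and only if β(n,r) ≡ 0 (mod n) for all integers r with 2 ≤ r < n, where β(n,r) = (-1)^⌊r/2⌋ · C((n-1)/2 - ⌈r/2⌉, ⌊r/2⌋) − C((n-1)/2, r) · (-2)^r. -/

import Mathlib

open Finset Nat

private lemma castDesc (m r : ℕ) :
    (m.descFactorial r : ℤ) = ∏ j ∈ range r, ((m : ℤ) - j) := by
  induction r with
  | zero => simp
  | succ r ih =>
    rcases le_or_gt r m with h | h
    · rw [Nat.descFactorial_succ, prod_range_succ, Nat.cast_mul, ih, mul_comm]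
      congr 1
      rw [Nat.cast_sub h]
    · rw [Nat.descFactorial_eq_zero_iff_lt.2 (by omega), Nat.cast_zero]
      refine (Finset.prod_eq_zero (Finset.mem_range.2 (by omega : m < r + 1)) ?_).symm
      simp

private lemma doubleFac (k : ℕ) : (2 * k)! = 2 ^ k * k ! * ∏ j ∈ range k, (2 * j + 1) := by
  induction k with
  | zero => simp
  | succ k ih =>
    have h : 2 * (k + 1) = (2 * k + 1) + 1 := by ring
    rw [h, Nat.factorial_succ, Nat.factorial_succ, ih, prod_range_succ,
      Nat.factorial_succ, pow_succ]
    ring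

private lemma idI1 (m r : ℕ) :
    (r ! : ℤ) * ((m.choose r : ℤ) * (-2) ^ r) =
      ∏ j ∈ range r, ((2 * j + 1 : ℤ) - (2 * m + 1)) := by
  have h2 : ((r ! * m.choose r : ℕ) : ℤ) = (m.descFactorial r : ℤ) := by
    rw [Nat.descFactorial_eq_factorial_mul_choose]
  calc (r ! : ℤ) * ((m.choose r : ℤ) * (-2) ^ r)
      = (-2) ^ r * ((r ! * m.choose r : ℕ) : ℤ) := by push_cast; ring
    _ = (-2) ^ r * ∏ j ∈ range r, ((m : ℤ) - j) := by rw [h2, castDesc]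
    _ = ∏ j ∈ range r, ((-2) * ((m : ℤ) - j)) := by
        rw [prod_mul_distrib, prod_const, card_range]
    _ = ∏ j ∈ range r, ((2 * j + 1 : ℤ) - (2 * m + 1)) :=
        prod_congr rfl fun j _ => by ring

private lemma idI2 (m k : ℕ) (h : k ≤ m) :
    ((2 ^ k * k ! : ℕ) : ℤ) * ((-1) ^ k * ((m - k).choose k : ℤ)) =
      ∏ j ∈ range k, ((2 * k + 2 * j + 1 : ℤ) - (2 * m + 1)) := by
  have h2 : ((k ! * (m - k).choose k : ℕ) : ℤ) = ((m - k).descFactorial k : ℤ) := by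
    rw [Nat.descFactorial_eq_factorial_mul_choose]
  calc ((2 ^ k * k ! : ℕ) : ℤ) * ((-1) ^ k * ((m - k).choose k : ℤ))
      = 2 ^ k * (-1) ^ k * ((k ! * (m - k).choose k : ℕ) : ℤ) := by push_cast; ring
    _ = 2 ^ k * (-1) ^ k * ∏ j ∈ range k, (((m - k : ℕ) : ℤ) - j) := by rw [h2, castDesc]
    _ = (-2) ^ k * ∏ j ∈ range k, (((m - k : ℕ) : ℤ) - j) := by
        rw [show ((-2 : ℤ)) ^ k = (-1) ^ k * 2 ^ k by rw [← neg_one_mul, mul_pow]]; ring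
    _ = ∏ j ∈ range k, ((-2) * (((m - k : ℕ) : ℤ) - j)) := by
        rw [prod_mul_distrib, prod_const, card_range]
    _ = ∏ j ∈ range k, ((2 * k + 2 * j + 1 : ℤ) - (2 * m + 1)) :=
        prod_congr rfl fun j _ => by rw [Nat.cast_sub h]; ring

private lemma idI3 (m k : ℕ) (h : k + 1 ≤ m) :
    ((2 ^ k * k ! : ℕ) : ℤ) * ((-1) ^ k * ((m - (k + 1)).choose k : ℤ)) =
      ∏ j ∈ range k, ((2 * k + 2 * j + 3 : ℤ) - (2 * m + 1)) := by
  have h2 : ((k ! * (m - (k + 1)).choose k : ℕ) : ℤ) = ((m - (k + 1)).descFactorial k : ℤ) := by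
    rw [Nat.descFactorial_eq_factorial_mul_choose]
  calc ((2 ^ k * k ! : ℕ) : ℤ) * ((-1) ^ k * ((m - (k + 1)).choose k : ℤ))
      = 2 ^ k * (-1) ^ k * ((k ! * (m - (k + 1)).choose k : ℕ) : ℤ) := by push_cast; ring
    _ = 2 ^ k * (-1) ^ k * ∏ j ∈ range k, (((m - (k + 1) : ℕ) : ℤ) - j) := by rw [h2, castDesc]
    _ = (-2) ^ k * ∏ j ∈ range k, (((m - (k + 1) : ℕ) : ℤ) - j) := by
        rw [show ((-2 : ℤ)) ^ k = (-1) ^ k * 2 ^ k by rw [← neg_one_mul, mul_pow]]; ring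
    _ = ∏ j ∈ range k, ((-2) * (((m - (k + 1) : ℕ) : ℤ) - j)) := by
        rw [prod_mul_distrib, prod_const, card_range]
    _ = ∏ j ∈ range k, ((2 * k + 2 * j + 3 : ℤ) - (2 * m + 1)) :=
        prod_congr rfl fun j _ => by rw [Nat.cast_sub h]; push_cast; ring

private lemma idNeven (k : ℕ) :
    (2 * k)! * ∏ j ∈ range k, (2 * k + 2 * j + 1) =
      2 ^ k * k ! * ∏ j ∈ range (2 * k), (2 * j + 1) := by
  have hpos : 0 < ∏ j ∈ range k, (2 * j + 1) := prod_pos fun _ _ => by omega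
  apply Nat.eq_of_mul_eq_mul_left hpos
  have hsplit : ((∏ j ∈ range k, (2 * j + 1)) * ∏ j ∈ range k, (2 * k + 2 * j + 1)) =
      ∏ j ∈ range (2 * k), (2 * j + 1) := by
    rw [two_mul, prod_range_add]
    congr 1
    exact prod_congr rfl fun j _ => by ring
  calc (∏ j ∈ range k, (2 * j + 1)) * ((2 * k)! * ∏ j ∈ range k, (2 * k + 2 * j + 1))
      = (2 * k)! * ((∏ j ∈ range k, (2 * j + 1)) * ∏ j ∈ range k, (2 * k + 2 * j + 1)) := by
        ring
    _ = (2 * k)! * ∏ j ∈ range (2 * k), (2 * j + 1) := by rw [hsplit]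
    _ = (∏ j ∈ range k, (2 * j + 1)) *
        (2 ^ k * k ! * ∏ j ∈ range (2 * k), (2 * j + 1)) := by rw [doubleFac]; ring

private lemma idNodd (k : ℕ) :
    (2 * k + 1)! * ∏ j ∈ range k, (2 * k + 2 * j + 3) =
      2 ^ k * k ! * ∏ j ∈ range (2 * k + 1), (2 * j + 1) := by
  have hpos : 0 < ∏ j ∈ range (k + 1), (2 * j + 1) := prod_pos fun _ _ => by omega
  apply Nat.eq_of_mul_eq_mul_left hpos
  have hsplit : ((∏ j ∈ range (k + 1), (2 * j + 1)) * ∏ j ∈ range k, (2 * k + 2 * j + 3)) =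
      ∏ j ∈ range (2 * k + 1), (2 * j + 1) := by
    have h : 2 * k + 1 = (k + 1) + k := by ring
    conv_rhs => rw [h, prod_range_add]
    congr 1
    exact prod_congr rfl fun j _ => by ring
  have hfact : (2 * k + 1)! = 2 ^ k * k ! * ∏ j ∈ range (k + 1), (2 * j + 1) := by
    rw [Nat.factorial_succ, doubleFac, prod_range_succ]
    ring
  calc (∏ j ∈ range (k + 1), (2 * j + 1)) *
        ((2 * k + 1)! * ∏ j ∈ range k, (2 * k + 2 * j + 3))
      = (2 * k + 1)! * ((∏ j ∈ range (k + 1), (2 * j + 1)) *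
          ∏ j ∈ range k, (2 * k + 2 * j + 3)) := by ring
    _ = (2 * k + 1)! * ∏ j ∈ range (2 * k + 1), (2 * j + 1) := by rw [hsplit]
    _ = (∏ j ∈ range (k + 1), (2 * j + 1)) *
        (2 ^ k * k ! * ∏ j ∈ range (2 * k + 1), (2 * j + 1)) := by rw [hfact]; ring

private lemma evenCase (n m k : ℕ) (hn : n = 2 * m + 1) (hp : n.Prime) (hk1 : 1 ≤ k)
    (hkn : 2 * k < n) :
    (n : ℤ) ∣ ((-1) ^ k * ((m - k).choose k : ℤ) - (m.choose (2 * k) : ℤ) * (-2) ^ (2 * k)) := by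
  haveI : NeZero n := ⟨by omega⟩
  haveI : Fact n.Prime := ⟨hp⟩
  have hkm : k ≤ m := by omega
  rw [← ZMod.intCast_zmod_eq_zero_iff_dvd]
  have hz : (2 * (m : ZMod n) + 1) = 0 := by
    have h0 : ((2 * m + 1 : ℕ) : ZMod n) = 0 := by rw [← hn]; exact ZMod.natCast_self n
    push_cast at h0
    linear_combination h0
  have e1 := congrArg (fun z : ℤ => (z : ZMod n)) (idI1 m (2 * k))
  have e2 := congrArg (fun z : ℤ => (z : ZMod n)) (idI2 m k hkm)
  have e3 := congrArg (fun z : ℕ => (z : ZMod n)) (idNeven k)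
  push_cast at e1 e2 e3
  simp only [hz, sub_zero] at e1 e2
  have hu : (((2 * k)! * (2 ^ k * k !) : ℕ) : ZMod n) ≠ 0 := by
    rw [Ne, ZMod.natCast_eq_zero_iff]
    intro hdvd
    rcases (Nat.Prime.dvd_mul hp).1 hdvd with h | h
    · exact absurd ((Nat.Prime.dvd_factorial hp).1 h) (by omega)
    · rcases (Nat.Prime.dvd_mul hp).1 h with h' | h'
      · have h2 := hp.dvd_of_dvd_pow h'
        have := Nat.le_of_dvd (by norm_num) h2
        omega
      · exact absurd ((Nat.Prime.dvd_factorial hp).1 h') (by omega)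
  have key : (((2 * k)! * (2 ^ k * k !) : ℕ) : ZMod n) *
      ((-1) ^ k * ((m - k).choose k : ZMod n) - (m.choose (2 * k) : ZMod n) * (-2) ^ (2 * k))
      = 0 := by
    push_cast
    linear_combination ((2 * k)! : ZMod n) * e2 - ((2 : ZMod n) ^ k * (k ! : ZMod n)) * e1 + e3
  have hfin := (mul_eq_zero.1 key).resolve_left hu
  push_cast
  linear_combination hfin

private lemma oddCase (n m k : ℕ) (hn : n = 2 * m + 1) (hp : n.Prime) (hk1 : 1 ≤ k)
    (hkn : 2 * k + 1 < n) :
    (n : ℤ) ∣ ((-1) ^ k * ((m - (k + 1)).choose k : ℤ)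
      - (m.choose (2 * k + 1) : ℤ) * (-2) ^ (2 * k + 1)) := by
  haveI : NeZero n := ⟨by omega⟩
  haveI : Fact n.Prime := ⟨hp⟩
  have hkm : k + 1 ≤ m := by omega
  rw [← ZMod.intCast_zmod_eq_zero_iff_dvd]
  have hz : (2 * (m : ZMod n) + 1) = 0 := by
    have h0 : ((2 * m + 1 : ℕ) : ZMod n) = 0 := by rw [← hn]; exact ZMod.natCast_self n
    push_cast at h0
    linear_combination h0
  have e1 := congrArg (fun z : ℤ => (z : ZMod n)) (idI1 m (2 * k + 1))
  have e2 := congrArg (fun z : ℤ => (z : ZMod n)) (idI3 m k hkm)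
  have e3 := congrArg (fun z : ℕ => (z : ZMod n)) (idNodd k)
  push_cast at e1 e2 e3
  simp only [hz, sub_zero] at e1 e2
  have hu : (((2 * k + 1)! * (2 ^ k * k !) : ℕ) : ZMod n) ≠ 0 := by
    rw [Ne, ZMod.natCast_eq_zero_iff]
    intro hdvd
    rcases (Nat.Prime.dvd_mul hp).1 hdvd with h | h
    · exact absurd ((Nat.Prime.dvd_factorial hp).1 h) (by omega)
    · rcases (Nat.Prime.dvd_mul hp).1 h with h' | h'
      · have h2 := hp.dvd_of_dvd_pow h'
        have := Nat.le_of_dvd (by norm_num) h2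
        omega
      · exact absurd ((Nat.Prime.dvd_factorial hp).1 h') (by omega)
  have key : (((2 * k + 1)! * (2 ^ k * k !) : ℕ) : ZMod n) *
      ((-1) ^ k * ((m - (k + 1)).choose k : ZMod n)
        - (m.choose (2 * k + 1) : ZMod n) * (-2) ^ (2 * k + 1)) = 0 := by
    push_cast
    linear_combination ((2 * k + 1)! : ZMod n) * e2
      - ((2 : ZMod n) ^ k * (k ! : ZMod n)) * e1 + e3
  have hfin := (mul_eq_zero.1 key).resolve_left hu
  push_cast
  linear_combination hfin

private lemma notDvd (n m : ℕ) (hm : n = 2 * m + 1) (h3 : 3 ≤ n) (hnp : ¬ n.Prime) :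
    ∃ r : ℕ, 2 ≤ r ∧ r < n ∧
      ¬ (n : ℤ) ∣ ((-1) ^ (r / 2) * ((m - (r + 1) / 2).choose (r / 2) : ℤ)
        - (m.choose r : ℤ) * (-2) ^ r) := by
  set p := n.minFac with hpdef
  have hp : p.Prime := Nat.minFac_prime (by omega)
  have hpd : p ∣ n := n.minFac_dvd
  have hp2 : 2 ≤ p := hp.two_le
  have hpodd : p ≠ 2 := by
    intro h
    have h2 : (2 : ℕ) ∣ n := h ▸ hpd
    omega
  obtain ⟨k, hk⟩ : ∃ k, p = 2 * k + 1 := by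
    rcases Nat.even_or_odd p with ⟨t, ht⟩ | ⟨t, ht⟩
    · exfalso
      have : (2 : ℕ) ∣ p := ⟨t, by omega⟩
      exact hpodd ((Nat.Prime.eq_one_or_self_of_dvd hp 2 this).resolve_left (by omega)).symm
    · exact ⟨t, by omega⟩
  have hpn : p < n := by
    rcases Nat.lt_or_ge p n with h | h
    · exact h
    · exfalso
      have : p ≤ n := Nat.minFac_le (by omega)
      have : p = n := by omega
      exact hnp (this ▸ hp)
  have hk1 : 1 ≤ k := by omega
  have hkm : k + 1 ≤ m := by omega
  refine ⟨p, by omega, hpn, ?_⟩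
  have hq2 : p / 2 = k := by omega
  have hq12 : (p + 1) / 2 = k + 1 := by omega
  rw [hq2, hq12]
  intro hdvd
  -- basic arithmetic setup
  set s := n / p with hsdef
  have hns : n = p * s := (Nat.mul_div_cancel' hpd).symm
  set a := n.factorization p with hadef
  have ha1 : 1 ≤ a := hp.factorization_pos_of_dvd (by omega) hpd
  have hMn : p ^ a ∣ n := Nat.ordProj_dvd n p
  have hsa : ¬ p ^ a ∣ s := by
    intro h
    have h2 : p ^ (a + 1) ∣ n := by
      rw [hns, pow_succ']
      exact mul_dvd_mul_left p h
    exact Nat.pow_succ_factorization_not_dvd (by omega) hp h2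
  haveI : NeZero (p ^ a) := ⟨pow_ne_zero a (by omega)⟩
  -- exact integer identities
  have hA := idI3 m k hkm
  have hB := idI1 m p
  have hsplitZ : (∏ j ∈ range p, ((2 * j + 1 : ℤ) - (2 * m + 1))) =
      ((∏ j ∈ range k, ((2 * j + 1 : ℤ) - (2 * m + 1))) * ((2 * (k : ℤ) + 1) - (2 * m + 1))) *
      ∏ j ∈ range k, ((2 * k + 2 * j + 3 : ℤ) - (2 * m + 1)) := by
    conv_lhs => rw [show p = (k + 1) + k from by omega, prod_range_add, prod_range_succ]
    congr 1
    exact prod_congr rfl fun j _ => by push_cast; ring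
  have hfk : ((2 * (k : ℤ) + 1) - (2 * (m : ℤ) + 1)) = (p : ℤ) * (1 - (s : ℤ)) := by
    have h1 : (p : ℤ) = 2 * k + 1 := by exact_mod_cast congrArg (Nat.cast (R := ℤ)) hk
    have h2 : (n : ℤ) = (p : ℤ) * s := by exact_mod_cast hns
    have h3 : (n : ℤ) = 2 * m + 1 := by exact_mod_cast hm
    linear_combination -h1 + h3 - h2
  have hpfact : (p ! : ℤ) = (p : ℤ) * ((2 * k)! : ℤ) := by
    rw [hk]
    push_cast [Nat.factorial_succ]
    ring
  have hBcancel : ((2 * k)! : ℤ) * ((m.choose p : ℤ) * (-2) ^ p) =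
      (1 - (s : ℤ)) * ((∏ j ∈ range k, ((2 * j + 1 : ℤ) - (2 * m + 1))) *
        ∏ j ∈ range k, ((2 * k + 2 * j + 3 : ℤ) - (2 * m + 1))) := by
    have hp0 : (p : ℤ) ≠ 0 := by exact_mod_cast (by omega : p ≠ 0)
    apply mul_left_cancel₀ hp0
    calc (p : ℤ) * (((2 * k)! : ℤ) * ((m.choose p : ℤ) * (-2) ^ p))
        = (p ! : ℤ) * ((m.choose p : ℤ) * (-2) ^ p) := by rw [hpfact]; ring
      _ = ∏ j ∈ range p, ((2 * j + 1 : ℤ) - (2 * m + 1)) := hB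
      _ = ((∏ j ∈ range k, ((2 * j + 1 : ℤ) - (2 * m + 1))) *
            ((2 * (k : ℤ) + 1) - (2 * m + 1))) *
          ∏ j ∈ range k, ((2 * k + 2 * j + 3 : ℤ) - (2 * m + 1)) := hsplitZ
      _ = (p : ℤ) * ((1 - (s : ℤ)) * ((∏ j ∈ range k, ((2 * j + 1 : ℤ) - (2 * m + 1))) *
            ∏ j ∈ range k, ((2 * k + 2 * j + 3 : ℤ) - (2 * m + 1)))) := by
          rw [hfk]; ring
  have hdfZ : ((2 * k)! : ℤ) =
      ((2 ^ k * k ! : ℕ) : ℤ) * ((∏ j ∈ range k, (2 * j + 1) : ℕ) : ℤ) := by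
    exact_mod_cast congrArg (Nat.cast (R := ℤ)) (doubleFac k)
  -- the exact integer identity for (2k)! * (A - T)
  have hbig : ((2 * k)! : ℤ) *
      (((-1) ^ k * ((m - (k + 1)).choose k : ℤ) - (m.choose p : ℤ) * (-2) ^ p)) =
      ((∏ j ∈ range k, (2 * j + 1) : ℕ) : ℤ) *
        (∏ j ∈ range k, ((2 * k + 2 * j + 3 : ℤ) - (2 * m + 1))) -
      (1 - (s : ℤ)) * ((∏ j ∈ range k, ((2 * j + 1 : ℤ) - (2 * m + 1))) *
        ∏ j ∈ range k, ((2 * k + 2 * j + 3 : ℤ) - (2 * m + 1))) := by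
    linear_combination ((-1) ^ k * ((m - (k + 1)).choose k : ℤ)) * hdfZ +
      ((∏ j ∈ range k, (2 * j + 1) : ℕ) : ℤ) * hA - hBcancel
  -- now pass to ZMod (p ^ a)
  have hnz : ((n : ℕ) : ZMod (p ^ a)) = 0 := (ZMod.natCast_eq_zero_iff n (p ^ a)).2 hMn
  have hzz : (2 * (m : ZMod (p ^ a)) + 1) = 0 := by
    have h0 : ((2 * m + 1 : ℕ) : ZMod (p ^ a)) = 0 := by rw [← hm]; exact hnz
    push_cast at h0
    linear_combination h0
  have ebig := congrArg (fun z : ℤ => (z : ZMod (p ^ a))) hbig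
  push_cast at ebig
  simp only [hzz, sub_zero] at ebig
  -- s * P1 = s * 2^k k!  in ZMod (p^a)
  have hXY : ((p : ℤ)) ∣ (((∏ j ∈ range k, (2 * k + 2 * j + 3) : ℕ) : ℤ) -
      ((∏ j ∈ range k, (2 * j + 2) : ℕ) : ℤ)) := by
    haveI : NeZero p := ⟨by omega⟩
    rw [← ZMod.intCast_zmod_eq_zero_iff_dvd]
    push_cast
    rw [sub_eq_zero]
    apply prod_congr rfl
    intro j _
    have hpz : ((2 * k + 1 : ℕ) : ZMod p) = 0 := by rw [← hk]; exact ZMod.natCast_self p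
    push_cast at hpz
    linear_combination hpz
  obtain ⟨c, hc⟩ := hXY
  have hsP : (s : ZMod (p ^ a)) *
        (∏ x ∈ range k, (2 * (k : ZMod (p ^ a)) + 2 * (x : ZMod (p ^ a)) + 3)) =
      (s : ZMod (p ^ a)) * ∏ x ∈ range k, (2 * (x : ZMod (p ^ a)) + 2) := by
    have h1 : ((s : ℤ)) * (((∏ j ∈ range k, (2 * k + 2 * j + 3) : ℕ) : ℤ) -
        ((∏ j ∈ range k, (2 * j + 2) : ℕ) : ℤ)) = (n : ℤ) * c := by
      rw [hc]
      have h2 : (n : ℤ) = (p : ℤ) * s := by exact_mod_cast hns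
      rw [h2]; ring
    have h2 := congrArg (fun z : ℤ => (z : ZMod (p ^ a))) h1
    push_cast at h2
    rw [hnz] at h2
    simp only [zero_mul] at h2
    linear_combination h2
  have hY : (∏ j ∈ range k, (2 * j + 2)) = 2 ^ k * k ! := by
    calc ∏ j ∈ range k, (2 * j + 2) = ∏ j ∈ range k, (2 * (j + 1)) :=
          prod_congr rfl fun j _ => by ring
      _ = 2 ^ k * ∏ j ∈ range k, (j + 1) := by rw [prod_mul_distrib, prod_const, card_range]
      _ = 2 ^ k * k ! := by rw [prod_range_add_one_eq_factorial]
  -- combine in ZMod (p^a) : (2k)! * (A - T - s) = 0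
  have hdfR := congrArg (fun z : ℕ => (z : ZMod (p ^ a))) (doubleFac k)
  push_cast at hdfR
  have hkey : (((2 * k)! : ℕ) : ZMod (p ^ a)) *
      (((-1) ^ k * ((m - (k + 1)).choose k : ZMod (p ^ a))
        - (m.choose p : ZMod (p ^ a)) * (-2) ^ p) - (s : ZMod (p ^ a))) = 0 := by
    have hYc := congrArg (fun z : ℕ => (z : ZMod (p ^ a))) hY
    push_cast at hYc
    linear_combination ebig - (s : ZMod (p ^ a)) * hdfR
      + (∏ x ∈ range k, (2 * (x : ZMod (p ^ a)) + 1)) * hsP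
      + (s : ZMod (p ^ a)) * (∏ x ∈ range k, (2 * (x : ZMod (p ^ a)) + 1)) * hYc
  have hu : IsUnit (((2 * k)! : ℕ) : ZMod (p ^ a)) := by
    rw [ZMod.isUnit_iff_coprime]
    apply Nat.Coprime.pow_right
    have hnd : ¬ p ∣ (2 * k)! := fun hd => by
      have := (Nat.Prime.dvd_factorial hp).1 hd
      omega
    exact ((Nat.Prime.coprime_iff_not_dvd hp).2 hnd).symm
  have hdvd2 : ((p ^ a : ℕ) : ℤ) ∣ ((-1) ^ k * ((m - (k + 1)).choose k : ℤ)
      - (m.choose p : ℤ) * (-2) ^ p) :=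
    dvd_trans (Int.natCast_dvd_natCast.2 hMn) hdvd
  have h0 : ((((-1) ^ k * ((m - (k + 1)).choose k : ℤ)
      - (m.choose p : ℤ) * (-2) ^ p : ℤ)) : ZMod (p ^ a)) = 0 :=
    (ZMod.intCast_zmod_eq_zero_iff_dvd _ _).2 hdvd2
  push_cast at h0
  have hs0 : ((s : ℕ) : ZMod (p ^ a)) = 0 := by
    have hz2 := hu.mul_right_eq_zero.1 hkey
    linear_combination h0 - hz2
  exact hsa ((ZMod.natCast_eq_zero_iff s (p ^ a)).1 hs0)

theorem prime_iff_beta_eq_zero (n : ℕ) (hn : Odd n) (h3 : 3 ≤ n) :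
    n.Prime ↔ ∀ r : ℕ, 2 ≤ r → r < n →
      (n : ℤ) ∣ ((-1) ^ (r / 2) * (((n - 1) / 2 - (r + 1) / 2).choose (r / 2) : ℤ)
        - (((n - 1) / 2).choose r : ℤ) * (-2) ^ r) := by
  obtain ⟨m, hm⟩ := hn
  have hm2 : (n - 1) / 2 = m := by omega
  constructor
  · intro hp r hr2 hrn
    rw [hm2]
    rcases Nat.even_or_odd r with ⟨k, hk⟩ | ⟨k, hk⟩
    · have h1 : r / 2 = k := by omega
      have h2 : (r + 1) / 2 = k := by omega
      rw [h1, h2, show r = 2 * k from by omega]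
      exact evenCase n m k (by omega) hp (by omega) (by omega)
    · have h1 : r / 2 = k := by omega
      have h2 : (r + 1) / 2 = k + 1 := by omega
      rw [h1, h2, show r = 2 * k + 1 from by omega]
      exact oddCase n m k (by omega) hp (by omega) (by omega)
  · intro h
    by_contra hnp
    obtain ⟨r, hr2, hrn, hnd⟩ := notDvd n m (by omega) h3 hnp
    exact hnd (by simpa [hm2] using h r hr2 hrn)
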